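/- Let Λ be a d-Gorenstein finite-dimensional algebra and M a finitely generated Λ-module. Then M is Gorenstein projective if and only if there exists an exact sequence 0 → M → P^0 → P^1 → ··· with each P^i projective. -/

import Mathlib

/-!
STATEMENT 4: Let Λ be a d-Gorenstein finite-dimensional algebra and M a finitely generated
Λ-module.  Then M is Gorenstein projective iff there is an exact sequence
0 → M → P⁰ → P¹ → ⋯ with each Pⁱ projective.
-/

open CategoryTheory

/-- `G` is a Gorenstein projective `A`-module: there is an acyclic (exact) complex of
projective `A`-modules `⋯ → P⁻¹ → P⁰ → P¹ → ⋯` which stays exact after applying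
`Hom_A(-, A)` (the preadditive Yoneda functor of `A`), such that `G ≅ ker (P⁰ → P¹)`. -/
def IsGorensteinProjective (A : Type) [Ring A] (G : Type) [AddCommGroup G] [Module A G] :
    Prop :=
  ∃ C : CochainComplex (ModuleCat.{0} A) ℤ,
    (∀ n, CategoryTheory.Projective (C.X n)) ∧
    (∀ n, C.ExactAt n) ∧
    (∀ n : ℤ,
      ((((preadditiveYoneda.obj (ModuleCat.of A A)).mapHomologicalComplex _).obj
        C.op)).ExactAt n) ∧
    Nonempty (G ≃ₗ[A] LinearMap.ker (C.d 0 1).hom)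

/-- `M` has injective dimension at most `n`: there is an exact sequence
`0 → M → I⁰ → I¹ → ⋯ → Iⁿ → 0` with all `Iⁱ` injective. -/
def HasInjDimLE (A : Type) [Ring A] (M : ModuleCat.{0} A) (n : ℕ) : Prop :=
  ∃ C : CochainComplex (ModuleCat.{0} A) ℕ,
    (∀ i, CategoryTheory.Injective (C.X i)) ∧
    (∀ i, n < i → Limits.IsZero (C.X i)) ∧
    (∀ i, 0 < i → C.ExactAt i) ∧
    Nonempty (M ≃ₗ[A] LinearMap.ker (C.d 0 1).hom)

section Auxiliary

variable {A : Type} [Ring A]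

private lemma injective_of_equiv {M N : Type} [AddCommGroup M] [Module A M] [AddCommGroup N]
    [Module A N] (e : M ≃ₗ[A] N) (h : Module.Injective A M) : Module.Injective A N := by
  constructor
  intro X Y _ _ _ _ f hf g
  obtain ⟨h', hh⟩ := h.out f hf (e.symm.toLinearMap ∘ₗ g)
  exact ⟨e.toLinearMap ∘ₗ h', fun x => by simpa using congrArg e (hh x)⟩

/-- Recursive notion of injective dimension `≤ d`. -/
private def InjD (A : Type) [Ring A] : ℕ → ModuleCat.{0} A → Prop
  | 0, N => Module.Injective A N
  | (d+1), N => ∃ (I N' : ModuleCat.{0} A) (ι : N →ₗ[A] I) (q : I →ₗ[A] N'),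
      Module.Injective A I ∧ Function.Injective ι ∧
      LinearMap.ker q = LinearMap.range ι ∧ Function.Surjective q ∧ InjD A d N'

private lemma injD_congr {d : ℕ} {N N' : ModuleCat.{0} A} (e : N ≃ₗ[A] N')
    (h : InjD A d N') : InjD A d N := by
  cases d with
  | zero => exact injective_of_equiv e.symm h
  | succ d =>
    obtain ⟨I, N'', ι, q, hI, hι, hker, hq, hrest⟩ := h
    refine ⟨I, N'', ι ∘ₗ e.toLinearMap, q, hI, hι.comp e.injective, ?_, hq, hrest⟩
    rw [hker, LinearMap.range_comp_of_range_eq_top ι (LinearEquiv.range e)]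

private lemma upExact_iff {α : Type} [AddRightCancelSemigroup α] [One α] [DecidableEq α]
    (E : HomologicalComplex (ModuleCat.{0} A) (ComplexShape.up α)) {i j k : α}
    (hij : i + 1 = j) (hjk : j + 1 = k) :
    E.ExactAt j ↔ LinearMap.ker (E.d j k).hom = LinearMap.range (E.d i j).hom := by
  rw [E.exactAt_iff' i j k ((ComplexShape.up α).prev_eq' (by simpa using hij))
    ((ComplexShape.up α).next_eq' (by simpa using hjk))]
  rw [ShortComplex.moduleCat_exact_iff_range_eq_ker]
  exact eq_comm

private lemma injD_aux : ∀ (d : ℕ) (X : ℕ → ModuleCat.{0} A) (f : ∀ i, X i →ₗ[A] X (i+1)),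
    (∀ i, Module.Injective A (X i)) →
    (∀ x : X (d+1), x = 0) →
    (∀ i, LinearMap.ker (f (i+1)) = LinearMap.range (f i)) →
    InjD A d (ModuleCat.of A (LinearMap.ker (f 0)))
  | 0, X, f, hinj, hzero, _ => by
    have hf0 : f 0 = 0 := by ext x; exact hzero _
    have htop : LinearMap.ker (f 0) = ⊤ := by rw [hf0]; exact LinearMap.ker_zero
    have e : (X 0 : Type) ≃ₗ[A] LinearMap.ker (f 0) :=
      ((LinearEquiv.ofEq _ _ htop).trans Submodule.topEquiv).symm
    exact injective_of_equiv e (hinj 0)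
  | (d+1), X, f, hinj, hzero, hex => by
    have hmem : ∀ x : X 0, f 0 x ∈ LinearMap.ker (f 1) := by
      intro x; rw [hex 0]; exact ⟨x, rfl⟩
    refine ⟨X 0, ModuleCat.of A (LinearMap.ker (f 1)), (LinearMap.ker (f 0)).subtype,
      (f 0).codRestrict _ hmem, hinj 0, Submodule.injective_subtype _, ?_, ?_, ?_⟩
    · rw [LinearMap.ker_codRestrict, Submodule.range_subtype]
    · rintro ⟨z, hz⟩
      rw [hex 0] at hz
      obtain ⟨x, hx⟩ := hz
      exact ⟨x, Subtype.ext (by simpa using hx)⟩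
    · exact injD_aux d (fun i => X (i+1)) (fun i => f (i+1)) (fun i => hinj (i+1))
        hzero (fun i => hex (i+1))

private lemma injD_of_hasInjDimLE {d : ℕ} {N : ModuleCat.{0} A}
    (h : HasInjDimLE A N d) : InjD A d N := by
  obtain ⟨C, hinj, hzero, hex, ⟨e⟩⟩ := h
  refine injD_congr e (injD_aux d C.X (fun i => (C.d i (i+1)).hom) ?_ ?_ ?_)
  · exact fun i => (Module.injective_iff_injective_object A (C.X i)).mpr (hinj i)
  · intro x
    have h1 : 𝟙 (C.X (d+1)) = 0 := (hzero (d+1) (lt_add_one d)).eq_of_src _ _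
    calc x = (𝟙 (C.X (d+1))).hom x := rfl
      _ = (0 : C.X (d+1) ⟶ C.X (d+1)).hom x := by rw [h1]
      _ = 0 := rfl
  · exact fun i => (upExact_iff C rfl rfl).mp (hex (i+1) i.succ_pos)

/-- The key dimension-shifting / extension lemma: if `N` has injective dimension `≤ d` and
the complex `E` of projectives is exact, then any map from a cocycle submodule to `N`
extends to the ambient module. -/
private lemma extend_of_injD : ∀ (d : ℕ) (N : ModuleCat.{0} A), InjD A d N →
    ∀ (E : CochainComplex (ModuleCat.{0} A) ℤ),
    (∀ n : ℤ, Module.Projective A (E.X n)) →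
    (∀ i j k : ℤ, i + 1 = j → j + 1 = k →
      LinearMap.ker (E.d j k).hom = LinearMap.range (E.d i j).hom) →
    ∀ (m m' : ℤ), m + 1 = m' → ∀ (φ : LinearMap.ker (E.d m m').hom →ₗ[A] N),
    ∃ ψ : E.X m →ₗ[A] N, ∀ z : LinearMap.ker (E.d m m').hom, ψ z = φ z
  | 0, N, hN, E, _, _, m, m', _, φ => by
    obtain ⟨ψ, hψ⟩ := hN.out (LinearMap.ker (E.d m m').hom).subtype
      (Submodule.injective_subtype _) φ
    exact ⟨ψ, hψ⟩
  | (d+1), N, hN, E, hproj, hex, m, m', hm, φ => by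
    obtain ⟨I, N', ι, q, hI, hι, hkerq, hq, hN'⟩ := hN
    obtain ⟨ψ₁, hψ₁⟩ := hI.out (LinearMap.ker (E.d m m').hom).subtype
      (Submodule.injective_subtype _) (ι ∘ₗ φ)
    set g : E.X m →ₗ[A] N' := q ∘ₗ ψ₁ with hgdef
    have hψ₁' : ∀ (z : E.X m) (hz : z ∈ LinearMap.ker (E.d m m').hom),
        ψ₁ z = ι (φ ⟨z, hz⟩) := fun z hz => hψ₁ ⟨z, hz⟩
    have hker_le : LinearMap.ker (E.d m m').hom ≤ LinearMap.ker g := by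
      intro z hz
      have h1 : g z = q (ι (φ ⟨z, hz⟩)) := by
        show q (ψ₁ z) = _
        rw [hψ₁' z hz]
      have hmem : ι (φ ⟨z, hz⟩) ∈ LinearMap.ker q := by
        rw [hkerq]; exact ⟨_, rfl⟩
      show g z = 0
      rw [h1]; exact hmem
    have hexx : LinearMap.ker (E.d m' (m'+1)).hom = LinearMap.range (E.d m m').hom :=
      hex m m' (m'+1) hm rfl
    let e1 : (LinearMap.ker (E.d m' (m'+1)).hom : Type) ≃ₗ[A] LinearMap.range (E.d m m').hom :=
      LinearEquiv.ofEq _ _ hexx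
    let e2 := (E.d m m').hom.quotKerEquivRange
    let φ₁ : (LinearMap.ker (E.d m' (m'+1)).hom : Type) →ₗ[A] N' :=
      ((LinearMap.ker (E.d m m').hom).liftQ g hker_le) ∘ₗ
        (e2.symm.toLinearMap ∘ₗ e1.toLinearMap)
    have hφ₁ : ∀ (x : E.X m) (hx : E.d m m' x ∈ LinearMap.ker (E.d m' (m'+1)).hom),
        φ₁ ⟨_, hx⟩ = g x := by
      intro x hx
      have h2 : e1 ⟨_, hx⟩ = ⟨E.d m m' x, ⟨x, rfl⟩⟩ := rfl
      have h3 : e2.symm ⟨E.d m m' x, ⟨x, rfl⟩⟩ =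
          Submodule.Quotient.mk (p := LinearMap.ker (E.d m m').hom) x := by
        rw [LinearEquiv.symm_apply_eq]
        exact (Subtype.ext (LinearMap.quotKerEquivRange_apply_mk _ x)).symm
      show ((LinearMap.ker (E.d m m').hom).liftQ g hker_le)
        (e2.symm (e1 ⟨_, hx⟩)) = g x
      rw [h2, h3]
      exact Submodule.liftQ_apply _ _ _
    obtain ⟨θ, hθ⟩ := extend_of_injD d N' hN' E hproj hex m' (m'+1) rfl φ₁
    haveI : Module.Projective A (E.X m') := hproj m'
    obtain ⟨τ, hτ⟩ := Module.projective_lifting_property q θ hq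
    have hdd : ∀ x : E.X m, E.d m' (m'+1) (E.d m m' x) = 0 := by
      intro x
      have h : (E.d m' (m'+1)).hom.comp (E.d m m').hom = 0 := by
        rw [← ModuleCat.hom_comp, E.d_comp_d m m' (m'+1), ModuleCat.hom_zero]
      exact LinearMap.ext_iff.mp h x
    set σ : E.X m →ₗ[A] I := ψ₁ - τ ∘ₗ (E.d m m').hom with hσdef
    have hmem2 : ∀ x : E.X m, σ x ∈ LinearMap.range ι := by
      intro x
      rw [← hkerq]
      show q (ψ₁ x - τ (E.d m m' x)) = 0
      rw [map_sub]
      have h1 : q (τ (E.d m m' x)) = θ (E.d m m' x) := LinearMap.ext_iff.mp hτ _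
      have h2 : θ (E.d m m' x) = φ₁ ⟨E.d m m' x, hdd x⟩ := hθ ⟨E.d m m' x, hdd x⟩
      rw [h1, h2, hφ₁ x (hdd x)]
      show q (ψ₁ x) - q (ψ₁ x) = 0
      exact sub_self _
    let eι := LinearEquiv.ofInjective ι hι
    refine ⟨eι.symm.toLinearMap ∘ₗ (LinearMap.codRestrict (LinearMap.range ι) σ hmem2), ?_⟩
    rintro ⟨z, hz⟩
    have hσz : σ z = ι (φ ⟨z, hz⟩) := by
      show ψ₁ z - τ (E.d m m' z) = ι (φ ⟨z, hz⟩)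
      rw [show E.d m m' z = 0 from hz, map_zero, sub_zero, hψ₁' z hz]
    show eι.symm (LinearMap.codRestrict (LinearMap.range ι) σ hmem2 z) = φ ⟨z, hz⟩
    rw [LinearEquiv.symm_apply_eq]
    apply Subtype.ext
    show σ z = (eι (φ ⟨z, hz⟩) : I)
    rw [hσz]
    rfl

/-! ### Construction of the complete resolution -/

private noncomputable def covF (W : ModuleCat.{0} A) : ModuleCat.{0} A :=
  ModuleCat.of A (W →₀ A)

private noncomputable def covπ (W : ModuleCat.{0} A) : covF W →ₗ[A] W :=
  Finsupp.linearCombination A _root_.id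

private lemma covπ_surj (W : ModuleCat.{0} A) : Function.Surjective (covπ W) := fun w =>
  ⟨Finsupp.single w 1, by
    show Finsupp.linearCombination A _root_.id (Finsupp.single w 1) = w
    rw [Finsupp.linearCombination_single, one_smul]
    rfl⟩

private noncomputable def Syz (Z : ModuleCat.{0} A) : ℕ → ModuleCat.{0} A
  | 0 => Z
  | k+1 => ModuleCat.of A (LinearMap.ker (covπ (Syz Z k)))

variable (C : CochainComplex (ModuleCat.{0} A) ℕ)

private noncomputable def Zc : ModuleCat.{0} A := ModuleCat.of A (LinearMap.ker (C.d 0 1).hom)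

private noncomputable def Xe : ℤ → ModuleCat.{0} A
  | .ofNat k => C.X k
  | .negSucc k => covF (Syz (Zc C) k)

private noncomputable def δe : ∀ n : ℤ, Xe C n ⟶ Xe C (n+1)
  | .ofNat k => C.d k (k+1)
  | .negSucc 0 => ModuleCat.ofHom ((LinearMap.ker (C.d 0 1).hom).subtype ∘ₗ covπ (Syz (Zc C) 0))
  | .negSucc (k+1) => ModuleCat.ofHom ((LinearMap.ker (covπ (Syz (Zc C) k))).subtype ∘ₗ covπ (Syz (Zc C) (k+1)))

private lemma sqe : ∀ n : ℤ, δe C n ≫ δe C (n+1) = 0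
  | .ofNat k => C.d_comp_d k (k+1) (k+1+1)
  | .negSucc 0 => by
    apply ModuleCat.hom_ext
    apply LinearMap.ext
    intro x
    show (C.d 0 (0+1)) ((LinearMap.ker (C.d 0 1).hom).subtype (covπ (Syz (Zc C) 0) x)) = 0
    exact (covπ (Syz (Zc C) 0) x).2
  | .negSucc 1 => by
    apply ModuleCat.hom_ext
    apply LinearMap.ext
    intro x
    show (LinearMap.ker (C.d 0 1).hom).subtype ((covπ (Syz (Zc C) 0))
      ((LinearMap.ker (covπ (Syz (Zc C) 0))).subtype (covπ (Syz (Zc C) 1) x))) = 0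
    rw [show (covπ (Syz (Zc C) 0)) ((LinearMap.ker (covπ (Syz (Zc C) 0))).subtype
      (covπ (Syz (Zc C) 1) x)) = 0 from (covπ (Syz (Zc C) 1) x).2]
    exact map_zero _
  | .negSucc (k+2) => by
    apply ModuleCat.hom_ext
    apply LinearMap.ext
    intro x
    show (LinearMap.ker (covπ (Syz (Zc C) k))).subtype ((covπ (Syz (Zc C) (k+1)))
      ((LinearMap.ker (covπ (Syz (Zc C) (k+1)))).subtype (covπ (Syz (Zc C) (k+2)) x))) = 0
    rw [show (covπ (Syz (Zc C) (k+1))) ((LinearMap.ker (covπ (Syz (Zc C) (k+1)))).subtype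
      (covπ (Syz (Zc C) (k+2)) x)) = 0 from (covπ (Syz (Zc C) (k+2)) x).2]
    exact map_zero _

/-- The complete resolution: the right coresolution `C` in degrees `≥ 0`, glued with a free
resolution of `ker (C.d 0 1)` in negative degrees. -/
private noncomputable def Ec : CochainComplex (ModuleCat.{0} A) ℤ :=
  CochainComplex.of (Xe C) (δe C) (sqe C)

private lemma ker_sub_comp {M : ModuleCat.{0} A} {p : Submodule A M} {W : ModuleCat.{0} A}
    (f : W →ₗ[A] p) : LinearMap.ker (p.subtype ∘ₗ f) = LinearMap.ker f := by
  ext x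
  simp only [LinearMap.mem_ker, LinearMap.coe_comp, Function.comp_apply]
  exact ⟨fun h => Submodule.injective_subtype p (h.trans (map_zero _).symm),
    fun h => by rw [h]; exact map_zero _⟩

private lemma range_sub_comp {M : ModuleCat.{0} A} {p : Submodule A M} {W : ModuleCat.{0} A}
    (f : W →ₗ[A] p) (hf : Function.Surjective f) :
    LinearMap.range (p.subtype ∘ₗ f) = p := by
  rw [LinearMap.range_comp_of_range_eq_top _ (LinearMap.range_eq_top.mpr hf),
    Submodule.range_subtype]

private lemma ec_exact_flex (hCex : ∀ i, 0 < i → C.ExactAt i) :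
    ∀ i j k : ℤ, i + 1 = j → j + 1 = k →
      LinearMap.ker ((Ec C).d j k).hom = LinearMap.range ((Ec C).d i j).hom := by
  intro i j k hij hjk
  subst hij; subst hjk
  rw [show (Ec C).d (i+1) (i+1+1) = δe C (i+1) from CochainComplex.of_d _ _ (i+1),
      show (Ec C).d i (i+1) = δe C i from CochainComplex.of_d _ _ i]
  cases i with
  | ofNat k =>
    show LinearMap.ker (C.d (k+1) (k+1+1)).hom = LinearMap.range (C.d k (k+1)).hom
    exact (upExact_iff C rfl rfl).mp (hCex (k+1) k.succ_pos)
  | negSucc k =>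
    cases k with
    | zero =>
      show LinearMap.ker (C.d 0 (0+1)).hom =
        LinearMap.range ((LinearMap.ker (C.d 0 1).hom).subtype ∘ₗ covπ (Syz (Zc C) 0))
      rw [range_sub_comp (p := LinearMap.ker (C.d 0 1).hom) (covπ (Syz (Zc C) 0)) (covπ_surj _)]
    | succ k =>
      cases k with
      | zero =>
        show LinearMap.ker ((LinearMap.ker (C.d 0 1).hom).subtype ∘ₗ covπ (Syz (Zc C) 0)) =
          LinearMap.range ((LinearMap.ker (covπ (Syz (Zc C) 0))).subtype ∘ₗ
            covπ (Syz (Zc C) (0+1)))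
        rw [ker_sub_comp (p := LinearMap.ker (C.d 0 1).hom) (covπ (Syz (Zc C) 0)),
          range_sub_comp (p := LinearMap.ker (covπ (Syz (Zc C) 0))) (covπ (Syz (Zc C) (0+1))) (covπ_surj _)]
        rfl
      | succ j =>
        show LinearMap.ker ((LinearMap.ker (covπ (Syz (Zc C) j))).subtype ∘ₗ
            covπ (Syz (Zc C) (j+1))) =
          LinearMap.range ((LinearMap.ker (covπ (Syz (Zc C) (j+1)))).subtype ∘ₗ
            covπ (Syz (Zc C) (j+2)))
        rw [ker_sub_comp (p := LinearMap.ker (covπ (Syz (Zc C) j))) (covπ (Syz (Zc C) (j+1))),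
          range_sub_comp (p := LinearMap.ker (covπ (Syz (Zc C) (j+1)))) (covπ (Syz (Zc C) (j+2)))
            (covπ_surj _)]
        rfl

private lemma ec_proj (hCproj : ∀ i, CategoryTheory.Projective (C.X i)) :
    ∀ n : ℤ, CategoryTheory.Projective ((Ec C).X n) := by
  intro n
  show CategoryTheory.Projective (Xe C n)
  cases n with
  | ofNat k => exact hCproj k
  | negSucc k =>
    exact ModuleCat.projective_of_free (M := covF (Syz (Zc C) k))
      (Finsupp.basisSingleOne)

end Auxiliary

/-- Over a d-Gorenstein algebra, a finitely generated module is Gorenstein projective iff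
it embeds in an exact sequence 0 → M → P⁰ → P¹ → ⋯ of projectives. -/
theorem isGorensteinProjective_iff_exists_right_projective_resolution
    (K A : Type) [Field K] [Ring A] [Algebra K A] [FiniteDimensional K A] (d : ℕ)
    (hGorL : HasInjDimLE A (ModuleCat.of A A) d)
    (hGorR : HasInjDimLE Aᵐᵒᵖ (ModuleCat.of Aᵐᵒᵖ Aᵐᵒᵖ) d)
    (M : Type) [AddCommGroup M] [Module A M] [Module.Finite A M] :
    IsGorensteinProjective A M ↔
      ∃ C : CochainComplex (ModuleCat.{0} A) ℕ,
        (∀ i, CategoryTheory.Projective (C.X i)) ∧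
        (∀ i, 0 < i → C.ExactAt i) ∧
        Nonempty (M ≃ₗ[A] LinearMap.ker (C.d 0 1).hom) := by
  constructor
  · rintro ⟨C, hproj, hex, -, ⟨e⟩⟩
    refine ⟨CochainComplex.of (fun i : ℕ => C.X i) (fun i => C.d i ((i+1 : ℕ) : ℤ))
      (fun i => C.d_comp_d _ _ _), fun i => hproj i, ?_, ?_⟩
    · intro i hi
      obtain ⟨j, rfl⟩ : ∃ j, i = j + 1 := ⟨i - 1, by omega⟩
      rw [upExact_iff _ (i := j) (j := j+1) (k := j+1+1) rfl rfl]
      dsimp only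
      rw [CochainComplex.of_d, CochainComplex.of_d]
      exact (upExact_iff C (i := ((j : ℕ) : ℤ)) (j := ((j+1 : ℕ) : ℤ)) (k := ((j+2 : ℕ) : ℤ))
        (by omega) (by omega)).mp (hex _)
    · have h : (CochainComplex.of (fun i : ℕ => C.X i) (fun i => C.d i ((i+1 : ℕ) : ℤ))
          (fun i => C.d_comp_d _ _ _)).d 0 1 = C.d ((0 : ℕ) : ℤ) ((1 : ℕ) : ℤ) :=
        CochainComplex.of_d (fun i : ℕ => C.X i) (fun i => C.d i ((i+1 : ℕ) : ℤ)) 0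
      rw [h]
      exact ⟨e⟩
  · rintro ⟨C, hCproj, hCex, ⟨e⟩⟩
    have hflex := ec_exact_flex C hCex
    have hEexact : ∀ n : ℤ, (Ec C).ExactAt n := fun n =>
      (upExact_iff _ (i := n - 1) (by omega) rfl).mpr (hflex (n-1) n (n+1) (by omega) rfl)
    have hEproj := ec_proj C hCproj
    have hEmproj : ∀ n : ℤ, Module.Projective A ((Ec C).X n) := fun n =>
      (IsProjective.iff_projective _).mpr (hEproj n)
    have hinjD : InjD A d (ModuleCat.of A A) := injD_of_hasInjDimLE hGorL
    refine ⟨Ec C, hEproj, hEexact, ?_, ?_⟩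
    · intro n
      set G := (((preadditiveYoneda.obj (ModuleCat.of A A)).mapHomologicalComplex _).obj
        (Ec C).op) with hGdef
      have hGd : ∀ (a b : ℤ) (ψ : (Ec C).X a ⟶ ModuleCat.of A A),
          (G.d a b) ψ = (Ec C).d b a ≫ ψ := fun a b ψ => rfl
      rw [G.exactAt_iff' (n+1) n (n-1)
        ((ComplexShape.up ℤ).symm.prev_eq' (by show n + 1 = n + 1; rfl))
        ((ComplexShape.up ℤ).symm.next_eq' (by show n - 1 + 1 = n; omega))]
      rw [ShortComplex.ab_exact_iff]
      intro φ0 hφ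
      let φ : (Ec C).X n ⟶ ModuleCat.of A A := φ0
      have hφ0 : ∀ y : (Ec C).X (n-1), φ ((Ec C).d (n-1) n y) = 0 := by
        intro y
        have h1 : (Ec C).d (n-1) n ≫ φ = 0 := by
          rw [← hGd n (n-1) φ]
          exact hφ
        exact LinearMap.ext_iff.mp (congrArg ModuleCat.Hom.hom h1) y
      have hker_le : LinearMap.ker ((Ec C).d n (n+1)).hom ≤
          LinearMap.ker φ.hom := by
        intro z hz
        rw [hflex (n-1) n (n+1) (by omega) rfl] at hz
        obtain ⟨y, rfl⟩ := hz
        exact hφ0 y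
      have hexx : LinearMap.ker ((Ec C).d (n+1) (n+2)).hom = LinearMap.range ((Ec C).d n (n+1)).hom :=
        hflex n (n+1) (n+2) rfl (by omega)
      let e1 : (LinearMap.ker ((Ec C).d (n+1) (n+2)).hom : Type) ≃ₗ[A]
          LinearMap.range ((Ec C).d n (n+1)).hom := LinearEquiv.ofEq _ _ hexx
      let e2 := ((Ec C).d n (n+1)).hom.quotKerEquivRange
      let ψ₀ : (LinearMap.ker ((Ec C).d (n+1) (n+2)).hom : Type) →ₗ[A] ModuleCat.of A A :=
        ((LinearMap.ker ((Ec C).d n (n+1)).hom).liftQ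
          φ.hom hker_le) ∘ₗ
          (e2.symm.toLinearMap ∘ₗ e1.toLinearMap)
      have hψ₀ : ∀ (x : (Ec C).X n) (hx : (Ec C).d n (n+1) x ∈
          LinearMap.ker ((Ec C).d (n+1) (n+2)).hom), ψ₀ ⟨_, hx⟩ = φ x := by
        intro x hx
        have h2 : e1 ⟨_, hx⟩ = ⟨(Ec C).d n (n+1) x, ⟨x, rfl⟩⟩ := rfl
        have h3 : e2.symm ⟨(Ec C).d n (n+1) x, ⟨x, rfl⟩⟩ =
            Submodule.Quotient.mk
              (p := LinearMap.ker ((Ec C).d n (n+1)).hom) x := by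
          rw [LinearEquiv.symm_apply_eq]
          exact (Subtype.ext (LinearMap.quotKerEquivRange_apply_mk _ x)).symm
        show ((LinearMap.ker ((Ec C).d n (n+1)).hom).liftQ
          φ.hom hker_le) (e2.symm (e1 ⟨_, hx⟩)) = φ x
        rw [h2, h3]
        exact Submodule.liftQ_apply _ _ _
      obtain ⟨ψ, hψ⟩ := extend_of_injD d (ModuleCat.of A A) hinjD (Ec C) hEmproj hflex
        (n+1) (n+2) (by omega) ψ₀
      refine ⟨(ModuleCat.ofHom ψ : (Ec C).X (n+1) ⟶ ModuleCat.of A A), ?_⟩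
      show (G.d (n+1) n) (ModuleCat.ofHom ψ : (Ec C).X (n+1) ⟶ ModuleCat.of A A) = φ
      show (Ec C).d n (n+1) ≫ (ModuleCat.ofHom ψ : (Ec C).X (n+1) ⟶ ModuleCat.of A A) = φ
      apply ModuleCat.hom_ext
      apply LinearMap.ext
      intro x
      have hmem : (Ec C).d n (n+1) x ∈ LinearMap.ker ((Ec C).d (n+1) (n+2)).hom := by
        have h : ((Ec C).d (n+1) (n+2)).hom.comp ((Ec C).d n (n+1)).hom = 0 := by
          rw [← ModuleCat.hom_comp, (Ec C).d_comp_d n (n+1) (n+2), ModuleCat.hom_zero]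
        exact LinearMap.ext_iff.mp h x
      show ψ ((Ec C).d n (n+1) x) = φ x
      rw [show ψ ((Ec C).d n (n+1) x) = ψ₀ ⟨_, hmem⟩ from hψ ⟨_, hmem⟩]
      exact hψ₀ x hmem
    · have h : (Ec C).d 0 1 = δe C 0 := CochainComplex.of_d (Xe C) (δe C) 0
      rw [h]
      exact ⟨e⟩
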